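/- Under these hypotheses, for every t > 0 the series defining p(t) converges, D n → 0 so for t ∈ (0, D 0] the number l(t) := min{n ∈ ℕ : D n < t} is well defined, and lim_{t→0+} (log p(t))/l(t) = β. (This is the intermediate asymptotic established via (4.7) in the proof of Theorem 1.1.) -/

import Mathlib

open Filter Set

private lemma aux_lin_le_exp (c d : ℝ) (hc : 0 < c) :
    ∀ᶠ m : ℕ in atTop, d * m + d ≤ Real.exp (c * m) := by
  have hpoly : Tendsto (fun m : ℕ => (m : ℝ) * (c ^ 2 / 4 * m + (c - d)) + (1 - d)) atTop atTop := by
    apply Filter.tendsto_atTop_add_const_right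
    apply Filter.Tendsto.atTop_mul_atTop₀ tendsto_natCast_atTop_atTop
    apply Filter.tendsto_atTop_add_const_right
    exact Filter.Tendsto.const_mul_atTop (by positivity) tendsto_natCast_atTop_atTop
  filter_upwards [hpoly.eventually_ge_atTop 0] with m hm
  have h1 : c * m / 2 + 1 ≤ Real.exp (c * m / 2) := Real.add_one_le_exp _
  have h2 : Real.exp (c * m) = Real.exp (c * m / 2) * Real.exp (c * m / 2) := by
    rw [← Real.exp_add]; ring_nf
  have h0 : (0 : ℝ) ≤ c * m / 2 + 1 := by positivity
  nlinarith [mul_le_mul h1 h1 h0 (Real.exp_nonneg _)]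

private lemma aux_geom (K Q : ℕ) :
    ∑ k ∈ Finset.Ico K Q, Real.exp ((K : ℝ) - k) ≤ 2 := by
  rcases le_or_gt K Q with h | h
  · rw [Finset.sum_Ico_eq_sum_range]
    have hhalf : Real.exp (-1) ≤ 1 / 2 := by
      have he : (2 : ℝ) ≤ Real.exp 1 := by nlinarith [Real.add_one_le_exp (1 : ℝ)]
      rw [Real.exp_neg, show (1 : ℝ) / 2 = 2⁻¹ by norm_num]
      exact inv_anti₀ (by norm_num) he
    calc ∑ j ∈ Finset.range (Q - K), Real.exp ((K : ℝ) - (K + j : ℕ))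
        ≤ ∑ j ∈ Finset.range (Q - K), (1 / 2 : ℝ) ^ j := by
          apply Finset.sum_le_sum
          intro j _
          have he : (K : ℝ) - ((K + j : ℕ) : ℝ) = (j : ℕ) * (-1) := by push_cast; ring
          rw [he, Real.exp_nat_mul]
          exact pow_le_pow_left₀ (Real.exp_nonneg _) hhalf j
      _ ≤ 2 := sum_geometric_two_le _
  · rw [Finset.Ico_eq_empty (by omega)]; norm_num

set_option maxHeartbeats 1000000 in
/-- intermediate asymptotic (4.7) in the proof of Theorem 1.1: the series
defining `p(t)` converges for every `t > 0`, `D n → 0` so that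
`l(t) := min{n : D n < t}` is well defined for `0 < t ≤ D 0`, and
`lim_{t→0+} log p(t) / l(t) = β`. -/
theorem stmt5 (H D R : ℕ → ℝ) (β L : ℝ)
    (hH_anti : Antitone H) (hH0 : H 0 = 1) (hH_pos : ∀ n, 0 < H n)
    (hD_anti : StrictAnti D) (hD_pos : ∀ n, 0 < D n)
    (hR_pos : ∀ n, 0 < R n) (hDHR : ∀ n, D n = H n * R n)
    (hβ : β > max 0 L)
    (hHlim : Tendsto (fun n : ℕ => Real.log (H n) / n) atTop (nhds (-β)))
    (hRlim : Tendsto (fun n : ℕ => Real.log (R n) / n) atTop (nhds L)) :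
    (∀ t : ℝ, 0 < t →
      Summable (fun n : ℕ => (1 / H (n + 1) - 1 / H n) * Real.exp (-t / D n))) ∧
    Tendsto D atTop (nhds 0) ∧
    (∀ t : ℝ, 0 < t → {n : ℕ | D n < t}.Nonempty) ∧
    Tendsto
      (fun t : ℝ =>
        Real.log (1 + ∑' n : ℕ, (1 / H (n + 1) - 1 / H n) * Real.exp (-t / D n)) /
          ((sInf {n : ℕ | D n < t} : ℕ) : ℝ))
      (nhdsWithin 0 (Ioi 0)) (nhds β) := by
  have hβpos : 0 < β := lt_of_le_of_lt (le_max_left 0 L) hβ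
  have hLβ : L < β := lt_of_le_of_lt (le_max_right 0 L) hβ
  set γ : ℝ := β - L with hγ_def
  have hγ : 0 < γ := by simp only [hγ_def]; linarith
  have hHne : ∀ n, H n ≠ 0 := fun n => (hH_pos n).ne'
  have hf_nonneg : ∀ n, 0 ≤ 1 / H (n + 1) - 1 / H n := by
    intro n
    have h := hH_anti (Nat.le_succ n)
    have h2 := one_div_le_one_div_of_le (hH_pos (n + 1)) h
    linarith
  have htel : ∀ N : ℕ, ∑ n ∈ Finset.range N, (1 / H (n + 1) - 1 / H n) = 1 / H N - 1 := by
    intro N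
    rw [Finset.sum_range_sub (fun n => 1 / H n), hH0]
    norm_num
  have hterm_nonneg : ∀ (t : ℝ) (n : ℕ),
      0 ≤ (1 / H (n + 1) - 1 / H n) * Real.exp (-t / D n) :=
    fun t n => mul_nonneg (hf_nonneg n) (Real.exp_nonneg _)
  have hDloglim : Tendsto (fun n : ℕ => Real.log (D n) / n) atTop (nhds (L - β)) := by
    have heq : (fun n : ℕ => Real.log (D n) / n)
        = fun n : ℕ => Real.log (H n) / n + Real.log (R n) / n := by
      funext n
      rw [hDHR n, Real.log_mul (hHne n) (hR_pos n).ne', add_div]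
    rw [heq, show L - β = -β + L by ring]
    exact hHlim.add hRlim
  have hlogD : Tendsto (fun n : ℕ => Real.log (D n)) atTop atBot := by
    have hev : ∀ᶠ n : ℕ in atTop, Real.log (D n) / n ≤ (L - β) / 2 :=
      hDloglim.eventually (eventually_le_nhds (by linarith))
    have hg : Tendsto (fun n : ℕ => (L - β) / 2 * n) atTop atBot :=
      Filter.Tendsto.const_mul_atTop_of_neg (by linarith) tendsto_natCast_atTop_atTop
    apply tendsto_atBot_mono' atTop ?_ hg
    filter_upwards [hev, eventually_ge_atTop 1] with n h1 h2
    have hn : (0 : ℝ) < n := by exact_mod_cast h2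
    have h3 := mul_le_mul_of_nonneg_right h1 hn.le
    rwa [div_mul_cancel₀ _ hn.ne'] at h3
  have hD0 : Tendsto D atTop (nhds 0) := by
    have heq : D = fun n => Real.exp (Real.log (D n)) :=
      funext fun n => (Real.exp_log (hD_pos n)).symm
    rw [heq]
    exact Real.tendsto_exp_atBot.comp hlogD
  have hNonempty : ∀ t : ℝ, 0 < t → {n : ℕ | D n < t}.Nonempty := by
    intro t ht
    obtain ⟨n, hn⟩ := (hD0.eventually_lt_const ht).exists
    exact ⟨n, hn⟩
  -- The master estimate
  have master : ∀ ε' : ℝ, 0 < ε' → ε' < γ / 2 →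
      ∃ M : ℕ, 1 ≤ M ∧ ∀ t : ℝ, 0 < t → ∀ m : ℕ, M ≤ m → sInf {n | D n < t} ≤ m →
        ((β - ε') * m ≤ Real.log (1 / H m)) ∧
        ∀ P : ℕ, ∑ n ∈ Finset.range P, (1 / H (n + 1) - 1 / H n) * Real.exp (-t / D n)
          ≤ ((⌈3 * ε' * (m : ℝ) / (γ - ε')⌉₊ : ℝ) + 3)
              * Real.exp ((β + ε') * ((m : ℝ) + (⌈3 * ε' * (m : ℝ) / (γ - ε')⌉₊ : ℝ))) := by
    intro ε' hε'0 hε'γ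
    have ha : 0 < γ - ε' := by linarith
    have hb : 0 < β + ε' := by linarith
    obtain ⟨N1, hN1⟩ := Metric.tendsto_atTop.mp hHlim ε' hε'0
    obtain ⟨N2, hN2⟩ := Metric.tendsto_atTop.mp hDloglim ε' hε'0
    obtain ⟨M0, hM0⟩ := Filter.eventually_atTop.mp
      ((aux_lin_le_exp ε' ((β + ε') * (1 + 3 * ε' / (γ - ε')) + 2 * (β + ε') + 1) hε'0).and
        (aux_lin_le_exp ε' ((β + ε' + 1) / (γ - ε') + 1) hε'0))
    refine ⟨max (max N1 N2) (max M0 1), le_trans (le_max_right M0 1) (le_max_right _ _), ?_⟩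
    intro t ht m hMm hlm
    have hm1 : 1 ≤ m := le_trans (le_trans (le_max_right M0 1) (le_max_right _ _)) hMm
    have hmN1 : N1 ≤ m := le_trans (le_trans (le_max_left _ _) (le_max_left _ _)) hMm
    have hmN2 : N2 ≤ m := le_trans (le_trans (le_max_right _ _) (le_max_left _ _)) hMm
    have hmM0 : M0 ≤ m := le_trans (le_trans (le_max_left M0 1) (le_max_right _ _)) hMm
    have hm0R : (1 : ℝ) ≤ m := by exact_mod_cast hm1
    -- log bounds for n ≥ m
    have hGub : ∀ n : ℕ, m ≤ n → Real.log (1 / H n) ≤ (β + ε') * n := by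
      intro n hn
      have hn1 : (1 : ℝ) ≤ n := by exact_mod_cast le_trans hm1 hn
      have h := hN1 n (le_trans hmN1 hn)
      rw [Real.dist_eq] at h
      obtain ⟨h1, h2⟩ := abs_lt.mp h
      have hn0 : (0 : ℝ) < n := by linarith
      have h3 : (-β - ε') * n < Real.log (H n) :=
        (lt_div_iff₀ hn0).mp (by linarith)
      rw [one_div, Real.log_inv]
      nlinarith [h3, hn0]
    have hGlb' : ∀ n : ℕ, m ≤ n → (β - ε') * n ≤ Real.log (1 / H n) := by
      intro n hn
      have hn1 : (1 : ℝ) ≤ n := by exact_mod_cast le_trans hm1 hn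
      have h := hN1 n (le_trans hmN1 hn)
      rw [Real.dist_eq] at h
      obtain ⟨h1, h2⟩ := abs_lt.mp h
      have hn0 : (0 : ℝ) < n := by linarith
      have h3 : Real.log (H n) < (-β + ε') * n :=
        (div_lt_iff₀ hn0).mp (by linarith)
      rw [one_div, Real.log_inv]
      nlinarith
    have hDub : ∀ n : ℕ, m ≤ n → Real.log (D n) ≤ -((γ - ε') * n) := by
      intro n hn
      have hn1 : (1 : ℝ) ≤ n := by exact_mod_cast le_trans hm1 hn
      have h := hN2 n (le_trans hmN2 hn)
      rw [Real.dist_eq] at h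
      obtain ⟨h1, h2⟩ := abs_lt.mp h
      have hn0 : (0 : ℝ) < n := by linarith
      have h3 : Real.log (D n) < (L - β + ε') * n :=
        (div_lt_iff₀ hn0).mp (by linarith)
      rw [hγ_def]
      nlinarith [h3, hn0]
    have hDlb : ∀ n : ℕ, m ≤ n → -((γ + ε') * n) ≤ Real.log (D n) := by
      intro n hn
      have hn1 : (1 : ℝ) ≤ n := by exact_mod_cast le_trans hm1 hn
      have h := hN2 n (le_trans hmN2 hn)
      rw [Real.dist_eq] at h
      obtain ⟨h1, h2⟩ := abs_lt.mp h
      have hn0 : (0 : ℝ) < n := by linarith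
      have h3 : (L - β - ε') * n < Real.log (D n) :=
        (lt_div_iff₀ hn0).mp (by linarith)
      rw [hγ_def]
      nlinarith [h3, hn0]
    have hDmt : D m < t :=
      lt_of_le_of_lt (hD_anti.antitone hlm) (Nat.sInf_mem (hNonempty t ht))
    set K : ℕ := ⌈3 * ε' * (m : ℝ) / (γ - ε')⌉₊ with hK_def
    have hK0 : (0 : ℝ) ≤ K := Nat.cast_nonneg K
    have hm0' : (0 : ℝ) ≤ (m : ℝ) := by linarith
    have hKa : 3 * ε' * (m : ℝ) ≤ (γ - ε') * K := by
      have h := Nat.le_ceil (3 * ε' * (m : ℝ) / (γ - ε'))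
      rw [div_le_iff₀ ha, ← hK_def] at h
      linarith
    obtain ⟨hC1', hC2'⟩ := hM0 m hmM0
    have hKle : (K : ℝ) ≤ 3 * ε' / (γ - ε') * m + 1 := by
      have hnum : (0:ℝ) ≤ 3 * ε' * (m : ℝ) := by positivity
      have h := Nat.ceil_lt_add_one (div_nonneg hnum ha.le)
      rw [← hK_def] at h
      have he : 3 * ε' * (m : ℝ) / (γ - ε') = 3 * ε' / (γ - ε') * m := by ring
      rw [he] at h
      linarith
    have hC1 : (β + ε') * ((m : ℝ) + K + 1) ≤ Real.exp (ε' * m) := by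
      have hbK : (β + ε') * (K : ℝ) ≤ (β + ε') * (3 * ε' / (γ - ε') * m + 1) :=
        mul_le_mul_of_nonneg_left hKle hb.le
      have hnn : (0 : ℝ) ≤ (β + ε') * (3 * ε' / (γ - ε')) :=
        mul_nonneg hb.le (div_nonneg (by linarith) ha.le)
      have hXm : (0 : ℝ) ≤ (β + ε') * (3 * ε' / (γ - ε')) * m := mul_nonneg hnn hm0'
      have hbm : (0 : ℝ) ≤ (β + ε') * m := mul_nonneg hb.le hm0'
      linarith [hC1', hbK, hXm, hbm]
    have hC2 : (β + ε') + 1 ≤ (γ - ε') * Real.exp (ε' * m) := by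
      have hd2 : (0:ℝ) < (β + ε' + 1) / (γ - ε') + 1 := by
        have := div_pos (by linarith : (0:ℝ) < β + ε' + 1) ha
        linarith
      have h1 : (β + ε' + 1) / (γ - ε') ≤ Real.exp (ε' * m) := by
        linarith [hC2', mul_nonneg hd2.le hm0']
      calc (β + ε') + 1 = (γ - ε') * ((β + ε' + 1) / (γ - ε')) := by field_simp
        _ ≤ (γ - ε') * Real.exp (ε' * m) := mul_le_mul_of_nonneg_left h1 ha.le
    -- per-term chain for n ≥ m
    have hchain : ∀ n : ℕ, m ≤ n →
        (1 / H (n + 1) - 1 / H n) * Real.exp (-t / D n)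
          ≤ Real.exp ((β + ε') * ((n : ℝ) + 1))
              * Real.exp (-Real.exp ((γ - ε') * ((n : ℝ) - m) - 2 * ε' * m)) := by
      intro n hn
      have h1 : 1 / H (n + 1) - 1 / H n ≤ Real.exp ((β + ε') * ((n : ℝ) + 1)) := by
        have hx : 1 / H (n + 1) ≤ Real.exp ((β + ε') * ((n : ℝ) + 1)) := by
          rw [← Real.exp_log (show (0:ℝ) < 1 / H (n + 1) from by have := hH_pos (n + 1); positivity)]
          apply Real.exp_le_exp.mpr
          have := hGub (n + 1) (by omega)
          push_cast at this ⊢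
          linarith
        have h0 : 0 < 1 / H n := by have := hH_pos n; positivity
        linarith
      have h2 : Real.exp (-t / D n)
          ≤ Real.exp (-Real.exp ((γ - ε') * ((n : ℝ) - m) - 2 * ε' * m)) := by
        rw [Real.exp_le_exp]
        have hDn := hD_pos n
        have hdm : Real.exp ((γ - ε') * ((n : ℝ) - m) - 2 * ε' * m) ≤ D m / D n := by
          have e1 : D m / D n = Real.exp (Real.log (D m) - Real.log (D n)) := by
            rw [Real.exp_sub, Real.exp_log (hD_pos m), Real.exp_log hDn]
          rw [e1, Real.exp_le_exp]
          have l1 := hDlb m le_rfl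
          have l2 := hDub n hn
          have hcast : (m : ℝ) ≤ n := by exact_mod_cast hn
          nlinarith [l1, l2]
        have hDm_t : D m / D n ≤ t / D n := (div_le_div_iff_of_pos_right hDn).mpr hDmt.le
        have h3 := le_trans hdm hDm_t
        have h4 : -t / D n = -(t / D n) := by ring
        rw [h4]
        linarith
      exact mul_le_mul h1 h2 (Real.exp_nonneg _) (Real.exp_nonneg _)
    have hEXP1 : (1 : ℝ) ≤ Real.exp ((β + ε') * ((m : ℝ) + K)) :=
      Real.one_le_exp (by positivity)
    have hHm : 1 / H m ≤ Real.exp ((β + ε') * m) := by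
      rw [← Real.exp_log (show (0:ℝ) < 1 / H m from by have := hH_pos m; positivity)]
      exact Real.exp_le_exp.mpr (hGub m le_rfl)
    have hsmall : ∀ Q : ℕ, Q ≤ m →
        ∑ n ∈ Finset.range Q, (1 / H (n + 1) - 1 / H n) * Real.exp (-t / D n)
          ≤ 1 / H m := by
      intro Q hQ
      calc ∑ n ∈ Finset.range Q, (1 / H (n + 1) - 1 / H n) * Real.exp (-t / D n)
          ≤ ∑ n ∈ Finset.range Q, (1 / H (n + 1) - 1 / H n) := by
            apply Finset.sum_le_sum
            intro n _
            have hle1 : Real.exp (-t / D n) ≤ 1 := by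
              rw [← Real.exp_zero]
              apply Real.exp_le_exp.mpr
              have h0 : 0 ≤ t / D n := div_nonneg ht.le (hD_pos n).le
              rw [neg_div]
              linarith
            exact mul_le_of_le_one_right (hf_nonneg n) hle1
        _ = 1 / H Q - 1 := htel Q
        _ ≤ 1 / H m := by
            have := one_div_le_one_div_of_le (hH_pos m) (hH_anti hQ)
            linarith
    constructor
    · exact hGlb' m le_rfl
    intro P
    by_cases hPm : P ≤ m
    · calc ∑ n ∈ Finset.range P, (1 / H (n + 1) - 1 / H n) * Real.exp (-t / D n)
          ≤ 1 / H m := hsmall P hPm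
        _ ≤ Real.exp ((β + ε') * m) := hHm
        _ ≤ ((K : ℝ) + 3) * Real.exp ((β + ε') * ((m : ℝ) + K)) := by
            have h1 : Real.exp ((β + ε') * m) ≤ Real.exp ((β + ε') * ((m : ℝ) + K)) :=
              Real.exp_le_exp.mpr (mul_le_mul_of_nonneg_left (by linarith) hb.le)
            have h2 : (0:ℝ) ≤ (K:ℝ) * Real.exp ((β + ε') * ((m : ℝ) + K)) :=
              mul_nonneg hK0 (Real.exp_nonneg _)
            linarith [hEXP1, Real.exp_nonneg ((β + ε') * ((m : ℝ) + K))]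
    · push_neg at hPm
      rw [Finset.range_eq_Ico, ← Finset.sum_Ico_consecutive _ (Nat.zero_le m) hPm.le]
      have hpart1 : ∑ n ∈ Finset.Ico 0 m, (1 / H (n + 1) - 1 / H n) * Real.exp (-t / D n)
          ≤ Real.exp ((β + ε') * m) := by
        rw [← Finset.range_eq_Ico]
        exact le_trans (hsmall m le_rfl) hHm
      have hpart2 : ∑ n ∈ Finset.Ico m P, (1 / H (n + 1) - 1 / H n) * Real.exp (-t / D n)
          ≤ (K : ℝ) * Real.exp ((β + ε') * ((m : ℝ) + K)) + 2 := by
        have hstep : ∑ n ∈ Finset.Ico m P, (1 / H (n + 1) - 1 / H n) * Real.exp (-t / D n)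
            ≤ ∑ n ∈ Finset.Ico m P, Real.exp ((β + ε') * ((n : ℝ) + 1))
                * Real.exp (-Real.exp ((γ - ε') * ((n : ℝ) - m) - 2 * ε' * m)) :=
          Finset.sum_le_sum fun n hn => hchain n (Finset.mem_Ico.mp hn).1
        have hhead : ∀ n : ℕ, m ≤ n → n < m + K →
            Real.exp ((β + ε') * ((n : ℝ) + 1))
              * Real.exp (-Real.exp ((γ - ε') * ((n : ℝ) - m) - 2 * ε' * m))
            ≤ Real.exp ((β + ε') * ((m : ℝ) + K)) := by
          intro n hn1 hn2
          have hcast : (n : ℝ) + 1 ≤ (m : ℝ) + K := by exact_mod_cast hn2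
          have h1 : Real.exp ((β + ε') * ((n : ℝ) + 1))
              ≤ Real.exp ((β + ε') * ((m : ℝ) + K)) :=
            Real.exp_le_exp.mpr (mul_le_mul_of_nonneg_left hcast hb.le)
          have h2 : Real.exp (-Real.exp ((γ - ε') * ((n : ℝ) - m) - 2 * ε' * m)) ≤ 1 := by
            rw [← Real.exp_zero]
            exact Real.exp_le_exp.mpr (neg_nonpos.mpr (Real.exp_nonneg _))
          calc Real.exp ((β + ε') * ((n : ℝ) + 1))
                * Real.exp (-Real.exp ((γ - ε') * ((n : ℝ) - m) - 2 * ε' * m))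
              ≤ Real.exp ((β + ε') * ((m : ℝ) + K)) * 1 :=
                mul_le_mul h1 h2 (Real.exp_nonneg _) (Real.exp_nonneg _)
            _ = _ := mul_one _
        have htail : ∀ n : ℕ, m + K ≤ n →
            Real.exp ((β + ε') * ((n : ℝ) + 1))
              * Real.exp (-Real.exp ((γ - ε') * ((n : ℝ) - m) - 2 * ε' * m))
            ≤ Real.exp (((m + K : ℕ) : ℝ) - n) := by
          intro n hn
          have hj : ((m : ℝ) + K) ≤ n := by exact_mod_cast hn
          rw [← Real.exp_add, Real.exp_le_exp]
          push_cast
          have hj0 : 0 ≤ (n : ℝ) - m - K := by linarith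
          have e1 : Real.exp (ε' * m) * Real.exp ((γ - ε') * ((n : ℝ) - m - K))
              ≤ Real.exp ((γ - ε') * ((n : ℝ) - m) - 2 * ε' * m) := by
            rw [← Real.exp_add]
            apply Real.exp_le_exp.mpr
            nlinarith [hKa, hj0]
          have e2 : 1 + (γ - ε') * ((n : ℝ) - m - K)
              ≤ Real.exp ((γ - ε') * ((n : ℝ) - m - K)) := by
            linarith [Real.add_one_le_exp ((γ - ε') * ((n : ℝ) - m - K))]
          have e3 := mul_le_mul_of_nonneg_left e2 (Real.exp_nonneg (ε' * m))
          have e4 := mul_le_mul_of_nonneg_right hC2 hj0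
          nlinarith [e1, e3, e4, hC1]

        by_cases hPK : P ≤ m + K
        · have hbnd : ∑ n ∈ Finset.Ico m P, Real.exp ((β + ε') * ((n : ℝ) + 1))
              * Real.exp (-Real.exp ((γ - ε') * ((n : ℝ) - m) - 2 * ε' * m))
              ≤ (Finset.Ico m P).card • Real.exp ((β + ε') * ((m : ℝ) + K)) := by
            apply Finset.sum_le_card_nsmul
            intro n hn
            obtain ⟨hn1, hn2⟩ := Finset.mem_Ico.mp hn
            exact hhead n hn1 (lt_of_lt_of_le hn2 hPK)
          rw [nsmul_eq_mul, Nat.card_Ico] at hbnd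
          have hcard : ((P - m : ℕ) : ℝ) ≤ (K : ℝ) := by
            exact_mod_cast Nat.sub_le_iff_le_add.mpr (by omega)
          have h2 : (0:ℝ) ≤ 2 := by norm_num
          linarith [hstep, hbnd,
            mul_le_mul_of_nonneg_right hcard (Real.exp_nonneg ((β + ε') * ((m : ℝ) + K)))]
        · push_neg at hPK
          have hsplit : ∑ n ∈ Finset.Ico m P, Real.exp ((β + ε') * ((n : ℝ) + 1))
                * Real.exp (-Real.exp ((γ - ε') * ((n : ℝ) - m) - 2 * ε' * m))
              = (∑ n ∈ Finset.Ico m (m + K), Real.exp ((β + ε') * ((n : ℝ) + 1))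
                  * Real.exp (-Real.exp ((γ - ε') * ((n : ℝ) - m) - 2 * ε' * m)))
                + ∑ n ∈ Finset.Ico (m + K) P, Real.exp ((β + ε') * ((n : ℝ) + 1))
                  * Real.exp (-Real.exp ((γ - ε') * ((n : ℝ) - m) - 2 * ε' * m)) :=
            (Finset.sum_Ico_consecutive _ (Nat.le_add_right m K) hPK.le).symm
          have hb1 : ∑ n ∈ Finset.Ico m (m + K), Real.exp ((β + ε') * ((n : ℝ) + 1))
                * Real.exp (-Real.exp ((γ - ε') * ((n : ℝ) - m) - 2 * ε' * m))
              ≤ (K : ℝ) * Real.exp ((β + ε') * ((m : ℝ) + K)) := by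
            have hbnd : _ ≤ (Finset.Ico m (m + K)).card
                • Real.exp ((β + ε') * ((m : ℝ) + K)) :=
              Finset.sum_le_card_nsmul (Finset.Ico m (m + K)) _ _
                (fun n hn => by
                  obtain ⟨hn1, hn2⟩ := Finset.mem_Ico.mp hn
                  exact hhead n hn1 hn2)
            rwa [nsmul_eq_mul, Nat.card_Ico, Nat.add_sub_cancel_left] at hbnd
          have hb2 : ∑ n ∈ Finset.Ico (m + K) P, Real.exp ((β + ε') * ((n : ℝ) + 1))
                * Real.exp (-Real.exp ((γ - ε') * ((n : ℝ) - m) - 2 * ε' * m))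
              ≤ 2 := by
            calc ∑ n ∈ Finset.Ico (m + K) P, Real.exp ((β + ε') * ((n : ℝ) + 1))
                  * Real.exp (-Real.exp ((γ - ε') * ((n : ℝ) - m) - 2 * ε' * m))
                ≤ ∑ n ∈ Finset.Ico (m + K) P, Real.exp (((m + K : ℕ) : ℝ) - n) :=
                  Finset.sum_le_sum fun n hn => htail n (Finset.mem_Ico.mp hn).1
              _ ≤ 2 := aux_geom (m + K) P
          linarith [hstep, hsplit ▸ add_le_add hb1 hb2]
      have hfin : Real.exp ((β + ε') * m) ≤ Real.exp ((β + ε') * ((m : ℝ) + K)) :=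
        Real.exp_le_exp.mpr (mul_le_mul_of_nonneg_left (by linarith) hb.le)
      calc (∑ n ∈ Finset.Ico 0 m, (1 / H (n + 1) - 1 / H n) * Real.exp (-t / D n))
            + ∑ n ∈ Finset.Ico m P, (1 / H (n + 1) - 1 / H n) * Real.exp (-t / D n)
          ≤ Real.exp ((β + ε') * m) + ((K : ℝ) * Real.exp ((β + ε') * ((m : ℝ) + K)) + 2) :=
            add_le_add hpart1 hpart2
        _ ≤ ((K : ℝ) + 3) * Real.exp ((β + ε') * ((m : ℝ) + K)) := by
            linarith [hEXP1, hfin]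

  refine ⟨?_, hD0, hNonempty, ?_⟩
  · -- summability
    obtain ⟨M, hM1, hM⟩ := master (γ / 4) (by linarith) (by linarith)
    intro t ht
    exact summable_of_sum_range_le (hterm_nonneg t)
      (fun P => (hM t ht (max M (sInf {n | D n < t})) (le_max_left _ _) (le_max_right _ _)).2 P)
  · have hsummable : ∀ t : ℝ, 0 < t →
        Summable (fun n : ℕ => (1 / H (n + 1) - 1 / H n) * Real.exp (-t / D n)) := by
      obtain ⟨M, hM1, hM⟩ := master (γ / 4) (by linarith) (by linarith)
      intro t ht
      exact summable_of_sum_range_le (hterm_nonneg t)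
        (fun P => (hM t ht (max M (sInf {n | D n < t})) (le_max_left _ _) (le_max_right _ _)).2 P)
    rw [Metric.tendsto_nhds]
    intro ε hε
    have hCβ : (0:ℝ) < 1 + 6 * (2 + β) / γ := by
      have := div_pos (by linarith : (0:ℝ) < 6 * (2 + β)) hγ
      linarith
    set Cβ : ℝ := 1 + 6 * (2 + β) / γ with hCβ_def
    have hCβ1 : (1:ℝ) ≤ Cβ := by
      have := div_nonneg (by linarith : (0:ℝ) ≤ 6 * (2 + β)) hγ.le
      rw [hCβ_def]; linarith
    have hCγ : Cβ * γ = γ + 6 * (2 + β) := by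
      rw [hCβ_def]
      field_simp
    set ε' : ℝ := min 1 (min (γ / 4) (ε / (2 * Cβ))) with hε'_def
    have hε'0 : 0 < ε' := by
      rw [hε'_def]
      exact lt_min one_pos (lt_min (by linarith) (div_pos hε (by linarith)))
    have hε'1 : ε' ≤ 1 := min_le_left _ _
    have hε'γ4 : ε' ≤ γ / 4 := le_trans (min_le_right _ _) (min_le_left _ _)
    have hε'C : ε' ≤ ε / (2 * Cβ) := le_trans (min_le_right _ _) (min_le_right _ _)
    have hε'γ : ε' < γ / 2 := lt_of_le_of_lt hε'γ4 (by linarith)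
    clear_value ε'
    clear_value Cβ
    have hε'ε : 2 * (ε' * Cβ) ≤ ε := by
      have h1 := mul_le_mul_of_nonneg_right hε'C (by linarith : (0:ℝ) ≤ Cβ)
      have h2 : ε / (2 * Cβ) * Cβ = ε / 2 := by
        field_simp
      rw [h2] at h1
      linarith
    have hε'half : ε' ≤ ε / 2 := by
      have h1 := mul_le_mul_of_nonneg_right hε'C (by linarith : (0:ℝ) ≤ Cβ)
      have h2 : ε / (2 * Cβ) * Cβ = ε / 2 := by
        field_simp
      rw [h2] at h1
      nlinarith [mul_nonneg hε'0.le (sub_nonneg.mpr hCβ1)]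
    obtain ⟨M, hM1, hM⟩ := master ε' hε'0 hε'γ
    set L0 : ℕ := max M (⌈2 * (5 + β) / ε⌉₊ + 1) with hL0_def
    have hmem : Ioo (0:ℝ) (D L0) ∈ nhdsWithin 0 (Ioi 0) :=
      Ioo_mem_nhdsGT (hD_pos L0)
    filter_upwards [hmem] with t htt
    obtain ⟨ht0, htD⟩ := htt
    set l : ℕ := sInf {n | D n < t} with hl_def
    clear_value l
    have hlL0 : L0 < l := by
      have hmem' : D l < t := by rw [hl_def]; exact Nat.sInf_mem (hNonempty t ht0)
      exact hD_anti.lt_iff_gt.mp (lt_trans hmem' htD)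
    have hlM : M ≤ l := le_trans (le_max_left _ _) hlL0.le
    have hl1 : 1 ≤ l := le_trans hM1 hlM
    have hl0 : (0:ℝ) < l := by exact_mod_cast Nat.lt_of_lt_of_le Nat.zero_lt_one hl1
    have hlbig : 2 * (5 + β) < ε * l := by
      have hx : 2 * (5 + β) / ε ≤ (⌈2 * (5 + β) / ε⌉₊ : ℝ) := Nat.le_ceil _
      have h2 : (⌈2 * (5 + β) / ε⌉₊ + 1 : ℕ) ≤ l := le_trans (le_max_right M _) hlL0.le
      have h3 : ((⌈2 * (5 + β) / ε⌉₊ : ℝ) + 1) ≤ (l : ℝ) := by exact_mod_cast h2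
      have h4 : 2 * (5 + β) / ε < (l : ℝ) := by linarith
      calc 2 * (5 + β) = ε * (2 * (5 + β) / ε) := by field_simp
        _ < ε * l := by exact mul_lt_mul_of_pos_left h4 hε
    obtain ⟨hGlb_l, hPS⟩ := hM t ht0 l hlM hl_def.ge
    set K : ℕ := ⌈3 * ε' * (l : ℝ) / (γ - ε')⌉₊ with hK_def
    have hK0 : (0:ℝ) ≤ K := Nat.cast_nonneg K
    have hsum := hsummable t ht0
    set p : ℝ := 1 + ∑' n : ℕ, (1 / H (n + 1) - 1 / H n) * Real.exp (-t / D n) with hp_def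
    clear_value p
    have htsum_nonneg : 0 ≤ ∑' n : ℕ, (1 / H (n + 1) - 1 / H n) * Real.exp (-t / D n) :=
      tsum_nonneg (fun n => hterm_nonneg t n)
    have hp0 : 0 < p := by rw [hp_def]; linarith
    -- upper bound
    have htsum_le : (∑' n : ℕ, (1 / H (n + 1) - 1 / H n) * Real.exp (-t / D n))
        ≤ ((K : ℝ) + 3) * Real.exp ((β + ε') * ((l : ℝ) + K)) :=
      hsum.tsum_le_of_sum_range_le hPS
    have hE1 : (1:ℝ) ≤ Real.exp ((β + ε') * ((l : ℝ) + K)) :=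
      Real.one_le_exp (by positivity)
    have hp_le : p ≤ ((K : ℝ) + 4) * Real.exp ((β + ε') * ((l : ℝ) + K)) := by
      rw [hp_def]
      nlinarith [htsum_le, hE1, hK0, Real.exp_nonneg ((β + ε') * ((l : ℝ) + K))]
    have hlogp_ub : Real.log p ≤ (β + ε') * ((l : ℝ) + K) + ((K : ℝ) + 3) := by
      have h1 := Real.log_le_log hp0 hp_le
      rw [Real.log_mul (by positivity) (Real.exp_ne_zero _), Real.log_exp] at h1
      have h2 : Real.log ((K : ℝ) + 4) ≤ (K : ℝ) + 3 := by
        have := Real.log_le_sub_one_of_pos (show (0:ℝ) < (K : ℝ) + 4 by positivity)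
        linarith
      linarith
    have hKγ : (K : ℝ) * γ < 6 * ε' * l + γ := by
      have hmono : 3 * ε' * (l : ℝ) / (γ - ε') ≤ 6 * ε' * (l : ℝ) / γ := by
        have he : 6 * ε' * (l : ℝ) / γ = 3 * ε' * (l : ℝ) / (γ / 2) := by
          field_simp
          ring
        rw [he]
        apply div_le_div_of_nonneg_left (by positivity) (by linarith) (by linarith)
      have h1 : (K : ℝ) ≤ (⌈6 * ε' * (l : ℝ) / γ⌉₊ : ℝ) := by
        rw [hK_def]
        exact_mod_cast Nat.ceil_mono hmono
      have h2 : (⌈6 * ε' * (l : ℝ) / γ⌉₊ : ℝ) < 6 * ε' * (l : ℝ) / γ + 1 :=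
        Nat.ceil_lt_add_one (by positivity)
      have h3 : (K : ℝ) < 6 * ε' * (l : ℝ) / γ + 1 := lt_of_le_of_lt h1 h2
      have h4 := mul_lt_mul_of_pos_right h3 hγ
      rw [add_mul, div_mul_cancel₀ _ hγ.ne'] at h4
      linarith
    clear_value K
    have hd : 2 * ε' * (γ + 6 * (2 + β)) ≤ ε * γ := by
      have h1 : 2 * (ε' * Cβ) * γ ≤ ε * γ := mul_le_mul_of_nonneg_right hε'ε hγ.le
      calc 2 * ε' * (γ + 6 * (2 + β)) = 2 * (ε' * (Cβ * γ)) := by rw [hCγ]; ring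
        _ = 2 * (ε' * Cβ) * γ := by ring
        _ ≤ ε * γ := h1
    have hup : Real.log p < (β + ε) * l := by
      nlinarith [mul_le_mul_of_nonneg_right hlogp_ub hγ.le,
        mul_le_mul_of_nonneg_left hKγ.le (show (0:ℝ) ≤ β + 2 by linarith),
        mul_le_mul_of_nonneg_right hd hl0.le,
        mul_le_mul_of_nonneg_right hε'1 (mul_nonneg hK0 hγ.le),
        mul_lt_mul_of_pos_right hlbig hγ,
        mul_nonneg hK0 hγ.le, hγ, hl0, hε'0.le]
    -- lower bound
    have hlow : Real.exp (-1) * (1 / H l) ≤ p := by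
      have hstep1 : ∀ n ∈ Finset.range l,
          Real.exp (-1) * (1 / H (n + 1) - 1 / H n)
            ≤ (1 / H (n + 1) - 1 / H n) * Real.exp (-t / D n) := by
        intro n hn
        rw [Finset.mem_range] at hn
        have hDn : t ≤ D n := by
          have hnot := Nat.notMem_of_lt_sInf (hl_def ▸ hn)
          simp only [Set.mem_setOf_eq, not_lt] at hnot
          exact hnot
        have hexp : Real.exp (-1) ≤ Real.exp (-t / D n) := by
          rw [Real.exp_le_exp, neg_div, neg_le_neg_iff, div_le_one (hD_pos n)]
          exact hDn
        calc Real.exp (-1) * (1 / H (n + 1) - 1 / H n)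
            ≤ Real.exp (-t / D n) * (1 / H (n + 1) - 1 / H n) :=
              mul_le_mul_of_nonneg_right hexp (hf_nonneg n)
          _ = (1 / H (n + 1) - 1 / H n) * Real.exp (-t / D n) := by ring
      have hsum1 := Finset.sum_le_sum hstep1
      have hsum2 : ∑ n ∈ Finset.range l, (1 / H (n + 1) - 1 / H n) * Real.exp (-t / D n)
          ≤ ∑' n : ℕ, (1 / H (n + 1) - 1 / H n) * Real.exp (-t / D n) :=
        Summable.sum_le_tsum _ (fun n _ => hterm_nonneg t n) hsum
      rw [← Finset.mul_sum, htel l] at hsum1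
      have hexp1 : Real.exp (-1) ≤ 1 := by
        rw [← Real.exp_zero]
        exact Real.exp_le_exp.mpr (by norm_num)
      have hXl : (0:ℝ) < 1 / H l := by have := hH_pos l; positivity
      have hpeq : p = 1 + ∑' n : ℕ, (1 / H (n + 1) - 1 / H n) * Real.exp (-t / D n) := hp_def
      linarith [hsum1, hsum2, hexp1, hpeq.le, hpeq.ge]
    have hlogp_lb : -1 + (β - ε') * l ≤ Real.log p := by
      have h0 : (0:ℝ) < Real.exp (-1) * (1 / H l) := by
        have := hH_pos l
        positivity
      have h1 := Real.log_le_log h0 hlow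
      rw [Real.log_mul (Real.exp_ne_zero _) (by have := hH_pos l; positivity : (1:ℝ) / H l ≠ 0),
        Real.log_exp] at h1
      linarith [hGlb_l]
    have hlo : (β - ε) * l < Real.log p := by
      linarith [hlogp_lb, hlbig, mul_le_mul_of_nonneg_right hε'half hl0.le, hβpos]
    rw [Real.dist_eq, abs_lt]
    constructor
    · have h1 : β - ε < Real.log p / l := by
        rw [lt_div_iff₀ hl0]
        linarith
      linarith
    · have h2 : Real.log p / l < β + ε := by
        rw [div_lt_iff₀ hl0]
        linarith
      linarith
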